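/- Fix positive block sizes d : Fin m → ℕ and e : Fin n → ℕ, and let R = Σ i : Fin m, Fin (d i), C = Σ j : Fin n, Fin (e j). Let T : Matrix R C ℂ, and let S be the set of pairs (A, B) of block-diagonal matrices A : Matrix R R ℂ, B : Matrix C C ℂ satisfying A * T = T * B and B * Tᴴ = Tᴴ * A. Suppose the only pairs (P, Q) ∈ S with P, Q Hermitian idempotents (P * P = P, Pᴴ = P, Q * Q = Q, Qᴴ = Q) are (0, 0) and (1, 1). Then every pair (A, B) ∈ S is of the form A = λ • 1, B = λ • 1 for some λ ∈ ℂ. (The endomorphism algebra of an indecomposable representation in the category of representations in Hilbert spaces is isomorphic to ℂ.) -/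

import Mathlib

open Matrix Polynomial

/-- A square matrix indexed by a sigma type `Σ i, Fin (d i)` is block-diagonal if all
entries between different blocks vanish. -/
def IsBlockDiag {m : ℕ} {d : Fin m → ℕ}
    (A : Matrix (Σ i, Fin (d i)) (Σ i, Fin (d i)) ℂ) : Prop :=
  ∀ p q : Σ i, Fin (d i), p.1 ≠ q.1 → A p q = 0

section Generic
variable {ι κ : Type*} [Fintype ι] [DecidableEq ι] [Fintype κ] [DecidableEq κ]

lemma powIntertwine {A : Matrix ι ι ℂ} {B : Matrix κ κ ℂ} {T : Matrix ι κ ℂ}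
    (h : A * T = T * B) : ∀ k, A ^ k * T = T * B ^ k
  | 0 => by simp
  | (k+1) => by
    rw [pow_succ, pow_succ, Matrix.mul_assoc, h, ← Matrix.mul_assoc, powIntertwine h k,
      Matrix.mul_assoc]

lemma aevalIntertwine {A : Matrix ι ι ℂ} {B : Matrix κ κ ℂ} {T : Matrix ι κ ℂ}
    (h : A * T = T * B) (p : ℝ[X]) :
    aeval A p * T = T * aeval B p := by
  induction p using Polynomial.induction_on' with
  | add p q hp hq => rw [map_add, map_add, Matrix.add_mul, Matrix.mul_add, hp, hq]
  | monomial k a =>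
    simp only [aeval_monomial, Algebra.algebraMap_eq_smul_one, smul_mul_assoc, one_mul]
    rw [Matrix.smul_mul, Matrix.mul_smul, powIntertwine h k]

lemma unitaryConjPow {U D : Matrix ι ι ℂ} (hU' : star U * U = 1) :
    ∀ k, (U * D * star U) ^ k = U * D ^ k * star U
  | 0 => by
    rw [pow_zero, pow_zero, mul_one]
    exact ((mul_eq_one_comm.mp hU')).symm
  | (k+1) => by
    rw [pow_succ, pow_succ, unitaryConjPow hU' k]
    have : U * D ^ k * star U * (U * D * star U) = U * D ^ k * (star U * U) * D * star U := by
      simp only [mul_assoc]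
    rw [this, hU', mul_one]
    simp only [mul_assoc]

lemma unitaryConjAeval {U D : Matrix ι ι ℂ} (hU' : star U * U = 1) (p : ℝ[X]) :
    aeval (U * D * star U) p = U * aeval D p * star U := by
  induction p using Polynomial.induction_on' with
  | add p q hp hq => rw [map_add, map_add, hp, hq, mul_add, add_mul]
  | monomial k a =>
    simp only [aeval_monomial, Algebra.algebraMap_eq_smul_one, smul_mul_assoc, one_mul,
      mul_smul_comm, unitaryConjPow hU' k]

lemma aevalDiagonal (f : ι → ℝ) (p : ℝ[X]) :
    aeval (diagonal (fun i => (f i : ℂ))) p = diagonal (fun i => ((p.eval (f i) : ℝ) : ℂ)) := by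
  induction p using Polynomial.induction_on' with
  | add p q hp hq =>
    rw [map_add, hp, hq, diagonal_add, diagonal_eq_diagonal_iff]
    intro i; push_cast [Pi.add_apply, eval_add]; ring
  | monomial k a =>
    rw [aeval_monomial, diagonal_pow, Algebra.algebraMap_eq_smul_one, smul_mul_assoc, one_mul,
      ← diagonal_smul, diagonal_eq_diagonal_iff]
    intro i; simp only [Pi.smul_apply, Pi.pow_apply, eval_monomial, Complex.real_smul]
    push_cast; ring

lemma aevalHermitian {A : Matrix ι ι ℂ} (hA : A.IsHermitian) (p : ℝ[X]) :
    aeval A p = (hA.eigenvectorUnitary : Matrix ι ι ℂ) *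
      diagonal (fun i => ((p.eval (hA.eigenvalues i) : ℝ) : ℂ)) *
      star (hA.eigenvectorUnitary : Matrix ι ι ℂ) := by
  conv_lhs => rw [hA.spectral_theorem, Unitary.conjStarAlgAut_apply]
  rw [unitaryConjAeval (by simp [SetLike.coe_mem, Unitary.star_mul_self_of_mem])]
  congr 2
  have : diagonal (RCLike.ofReal ∘ hA.eigenvalues) =
      diagonal (fun i => ((hA.eigenvalues i : ℝ) : ℂ)) := rfl
  rw [this, aevalDiagonal]

lemma hermitianAevalZero {A : Matrix ι ι ℂ} (hA : A.IsHermitian) {p : ℝ[X]}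
    (h : ∀ i, p.eval (hA.eigenvalues i) = 0) : aeval A p = 0 := by
  rw [aevalHermitian hA p]
  have : (fun i => ((p.eval (hA.eigenvalues i) : ℝ) : ℂ)) = (fun _ => (0 : ℂ)) :=
    funext fun i => by simp [h i]
  rw [this, diagonal_zero, mul_zero, zero_mul]

lemma hermitianAevalOne {A : Matrix ι ι ℂ} (hA : A.IsHermitian) {p : ℝ[X]}
    (h : ∀ i, p.eval (hA.eigenvalues i) = 1) : aeval A p = 1 := by
  rw [aevalHermitian hA p]
  have : (fun i => ((p.eval (hA.eigenvalues i) : ℝ) : ℂ)) = (fun _ => (1 : ℂ)) :=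
    funext fun i => by simp [h i]
  rw [this, diagonal_one, mul_one]
  exact (Matrix.mem_unitaryGroup_iff).mp (hA.eigenvectorUnitary).2

lemma hermitianAevalIsHermitian {A : Matrix ι ι ℂ} (hA : A.IsHermitian) (p : ℝ[X]) :
    (aeval A p).IsHermitian := by
  rw [aevalHermitian hA p]
  have hD : star (diagonal (fun i => ((p.eval (hA.eigenvalues i) : ℝ) : ℂ)))
      = diagonal (fun i => ((p.eval (hA.eigenvalues i) : ℝ) : ℂ)) := by
    rw [Matrix.star_eq_conjTranspose, diagonal_conjTranspose, diagonal_eq_diagonal_iff]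
    intro i
    simp [Pi.star_apply, Complex.star_def, Complex.conj_ofReal]
  rw [Matrix.IsHermitian, ← Matrix.star_eq_conjTranspose]
  simp only [StarMul.star_mul, star_star, mul_assoc, hD]

end Generic

section BD
variable {μ : ℕ} {δ : Fin μ → ℕ}

lemma bd_one : IsBlockDiag (1 : Matrix (Σ i, Fin (δ i)) (Σ i, Fin (δ i)) ℂ) := fun _ _ h =>
  Matrix.one_apply_ne (fun hpq => h (congrArg Sigma.fst hpq))

lemma bd_mul {A B : Matrix (Σ i, Fin (δ i)) (Σ i, Fin (δ i)) ℂ}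
    (hA : IsBlockDiag A) (hB : IsBlockDiag B) : IsBlockDiag (A * B) := fun p q h => by
  rw [Matrix.mul_apply]
  refine Finset.sum_eq_zero fun r _ => ?_
  by_cases hr : p.1 = r.1
  · rw [hB r q (hr ▸ h), mul_zero]
  · rw [hA p r hr, zero_mul]

lemma bd_add {A B : Matrix (Σ i, Fin (δ i)) (Σ i, Fin (δ i)) ℂ}
    (hA : IsBlockDiag A) (hB : IsBlockDiag B) : IsBlockDiag (A + B) := fun p q h => by
  rw [Matrix.add_apply, hA p q h, hB p q h, add_zero]

lemma bd_sub {A B : Matrix (Σ i, Fin (δ i)) (Σ i, Fin (δ i)) ℂ}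
    (hA : IsBlockDiag A) (hB : IsBlockDiag B) : IsBlockDiag (A - B) := fun p q h => by
  rw [Matrix.sub_apply, hA p q h, hB p q h, sub_zero]

lemma bd_smul {S : Type*} [SMulZeroClass S ℂ] {c : S}
    {A : Matrix (Σ i, Fin (δ i)) (Σ i, Fin (δ i)) ℂ}
    (hA : IsBlockDiag A) : IsBlockDiag (c • A) := fun p q h => by
  rw [Matrix.smul_apply, hA p q h, smul_zero]

lemma bd_pow {A : Matrix (Σ i, Fin (δ i)) (Σ i, Fin (δ i)) ℂ}
    (hA : IsBlockDiag A) : ∀ k, IsBlockDiag (A ^ k)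
  | 0 => by rw [pow_zero]; exact bd_one
  | (k+1) => by rw [pow_succ]; exact bd_mul (bd_pow hA k) hA

lemma bd_conjT {A : Matrix (Σ i, Fin (δ i)) (Σ i, Fin (δ i)) ℂ}
    (hA : IsBlockDiag A) : IsBlockDiag Aᴴ := fun p q h => by
  rw [Matrix.conjTranspose_apply, hA q p (Ne.symm h), star_zero]

lemma bd_aeval {A : Matrix (Σ i, Fin (δ i)) (Σ i, Fin (δ i)) ℂ}
    (hA : IsBlockDiag A) (p : ℝ[X]) : IsBlockDiag (aeval A p) := by
  induction p using Polynomial.induction_on' with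
  | add p q hp hq => rw [map_add]; exact bd_add hp hq
  | monomial k a =>
    rw [aeval_monomial, Algebra.algebraMap_eq_smul_one, smul_mul_assoc, one_mul]
    exact bd_smul (bd_pow hA k)

end BD

/-- The Hermitian case of the main theorem. -/
lemma hermitian_pair_scalar (m n : ℕ)
    (d : Fin m → ℕ) (e : Fin n → ℕ)
    (hne : Nonempty (Σ i, Fin (d i)) ∨ Nonempty (Σ j, Fin (e j)))
    (T : Matrix (Σ i, Fin (d i)) (Σ j, Fin (e j)) ℂ)
    (hidem : ∀ (P : Matrix (Σ i, Fin (d i)) (Σ i, Fin (d i)) ℂ)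
               (Q : Matrix (Σ j, Fin (e j)) (Σ j, Fin (e j)) ℂ),
        IsBlockDiag P → IsBlockDiag Q →
        P * T = T * Q → Q * Tᴴ = Tᴴ * P →
        P * P = P → Pᴴ = P → Q * Q = Q → Qᴴ = Q →
        (P = 0 ∧ Q = 0) ∨ (P = 1 ∧ Q = 1))
    (A : Matrix (Σ i, Fin (d i)) (Σ i, Fin (d i)) ℂ)
    (B : Matrix (Σ j, Fin (e j)) (Σ j, Fin (e j)) ℂ)
    (hAbd : IsBlockDiag A) (hBbd : IsBlockDiag B)
    (hAT : A * T = T * B) (hBT : B * Tᴴ = Tᴴ * A)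
    (hAh : A.IsHermitian) (hBh : B.IsHermitian) :
    ∃ l : ℝ, A = (l : ℂ) • 1 ∧ B = (l : ℂ) • 1 := by
  classical
  set Λ : Finset ℝ :=
    (Finset.univ.image hAh.eigenvalues) ∪ (Finset.univ.image hBh.eigenvalues) with hΛ
  have hinj : Set.InjOn (id : ℝ → ℝ) (Λ : Set ℝ) := Function.injective_id.injOn
  have hmemA : ∀ i, hAh.eigenvalues i ∈ Λ := fun i =>
    Finset.mem_union_left _ (Finset.mem_image_of_mem _ (Finset.mem_univ i))
  have hmemB : ∀ j, hBh.eigenvalues j ∈ Λ := fun j =>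
    Finset.mem_union_right _ (Finset.mem_image_of_mem _ (Finset.mem_univ j))
  -- Lagrange basis polynomials
  set L : ℝ → ℝ[X] := fun t => Lagrange.basis Λ id t with hL
  have heval_self : ∀ t ∈ Λ, (L t).eval t = 1 := fun t ht => by
    simpa using Lagrange.eval_basis_self hinj ht
  have heval_ne : ∀ t s : ℝ, t ≠ s → s ∈ Λ → (L t).eval s = 0 := fun t s hts hs => by
    simpa using Lagrange.eval_basis_of_ne (s := Λ) (v := id) hts hs
  have heval01 : ∀ t, t ∈ Λ → ∀ s ∈ Λ, (L t).eval s = if t = s then 1 else 0 := by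
    intro t ht s hs
    by_cases hts : t = s
    · subst hts; simp [heval_self t ht]
    · simp [hts, heval_ne t s hts hs]
  set P : ℝ → Matrix (Σ i, Fin (d i)) (Σ i, Fin (d i)) ℂ := fun t => aeval A (L t) with hP
  set Q : ℝ → Matrix (Σ j, Fin (e j)) (Σ j, Fin (e j)) ℂ := fun t => aeval B (L t) with hQ
  -- each (P t, Q t) with t ∈ Λ is a Hermitian idempotent pair in S
  have hPQ : ∀ t ∈ Λ, (P t = 0 ∧ Q t = 0) ∨ (P t = 1 ∧ Q t = 1) := by
    intro t ht
    have hP2 : P t * P t = P t := by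
      have h0 : aeval A (L t * L t - L t) = 0 := by
        apply hermitianAevalZero hAh
        intro i
        by_cases hts : t = hAh.eigenvalues i
        · simp [eval_sub, eval_mul, ← hts, heval_self t ht]
        · simp [eval_sub, eval_mul, heval_ne t _ hts (hmemA i)]
      rw [map_sub, _root_.map_mul] at h0
      have := sub_eq_zero.mp h0
      simpa [hP] using this
    have hQ2 : Q t * Q t = Q t := by
      have h0 : aeval B (L t * L t - L t) = 0 := by
        apply hermitianAevalZero hBh
        intro j
        by_cases hts : t = hBh.eigenvalues j
        · simp [eval_sub, eval_mul, ← hts, heval_self t ht]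
        · simp [eval_sub, eval_mul, heval_ne t _ hts (hmemB j)]
      rw [map_sub, _root_.map_mul] at h0
      have := sub_eq_zero.mp h0
      simpa [hQ] using this
    exact hidem (P t) (Q t) (bd_aeval hAbd _) (bd_aeval hBbd _)
      (aevalIntertwine hAT _) (aevalIntertwine hBT _)
      hP2 (hermitianAevalIsHermitian hAh _) hQ2 (hermitianAevalIsHermitian hBh _)
  -- the sum of all P t is 1 (and same for Q)
  have hsum_eval : ∀ s ∈ Λ, (∑ t ∈ Λ, L t).eval s = 1 := by
    intro s hs
    rw [eval_finset_sum]
    rw [Finset.sum_congr rfl (fun t ht => heval01 t ht s hs)]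
    simp [Finset.sum_ite_eq' Λ s (fun _ => (1 : ℝ)), hs]
  have hsumP : ∑ t ∈ Λ, P t = 1 := by
    rw [show ∑ t ∈ Λ, P t = aeval A (∑ t ∈ Λ, L t) by rw [map_sum]]
    exact hermitianAevalOne hAh (fun i => hsum_eval _ (hmemA i))
  have hsumQ : ∑ t ∈ Λ, Q t = 1 := by
    rw [show ∑ t ∈ Λ, Q t = aeval B (∑ t ∈ Λ, L t) by rw [map_sum]]
    exact hermitianAevalOne hBh (fun j => hsum_eval _ (hmemB j))
  -- find t₀ with (P t₀, Q t₀) = (1, 1)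
  have hex : ∃ t₀ ∈ Λ, P t₀ = 1 ∧ Q t₀ = 1 := by
    by_contra hcon
    push_neg at hcon
    have hz : ∀ t ∈ Λ, P t = 0 ∧ Q t = 0 := by
      intro t ht
      rcases hPQ t ht with h | h
      · exact h
      · exact absurd h.2 (hcon t ht h.1)
    rcases hne with hp | hq
    · obtain ⟨p0⟩ := hp
      have h10 : (1 : Matrix (Σ i, Fin (d i)) (Σ i, Fin (d i)) ℂ) = 0 := by
        rw [← hsumP]
        exact Finset.sum_eq_zero (fun t ht => (hz t ht).1)
      have := congrFun (congrFun h10 p0) p0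
      simp [Matrix.one_apply_eq] at this
    · obtain ⟨q0⟩ := hq
      have h10 : (1 : Matrix (Σ j, Fin (e j)) (Σ j, Fin (e j)) ℂ) = 0 := by
        rw [← hsumQ]
        exact Finset.sum_eq_zero (fun t ht => (hz t ht).2)
      have := congrFun (congrFun h10 q0) q0
      simp [Matrix.one_apply_eq] at this
  obtain ⟨t₀, ht₀, hP1, hQ1⟩ := hex
  refine ⟨t₀, ?_, ?_⟩
  · have h0 : aeval A (L t₀ * (X - C t₀)) = 0 := by
      apply hermitianAevalZero hAh
      intro i
      by_cases hts : t₀ = hAh.eigenvalues i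
      · simp [eval_mul, hts]
      · simp [eval_mul, heval_ne t₀ _ hts (hmemA i)]
    rw [_root_.map_mul, map_sub, aeval_X, aeval_C] at h0
    have : (P t₀) * (A - algebraMap ℝ _ t₀) = 0 := h0
    rw [hP1, one_mul, sub_eq_zero] at this
    rw [this, IsScalarTower.algebraMap_apply ℝ ℂ, Algebra.algebraMap_eq_smul_one]
    norm_num
  · have h0 : aeval B (L t₀ * (X - C t₀)) = 0 := by
      apply hermitianAevalZero hBh
      intro j
      by_cases hts : t₀ = hBh.eigenvalues j
      · simp [eval_mul, hts]
      · simp [eval_mul, heval_ne t₀ _ hts (hmemB j)]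
    rw [_root_.map_mul, map_sub, aeval_X, aeval_C] at h0
    have : (Q t₀) * (B - algebraMap ℝ _ t₀) = 0 := h0
    rw [hQ1, one_mul, sub_eq_zero] at this
    rw [this, IsScalarTower.algebraMap_apply ℝ ℂ, Algebra.algebraMap_eq_smul_one]
    norm_num

/-- If the only Hermitian idempotent pairs in the `*`-closed endomorphism algebra of a
representation `T` (in the category of representations in Hilbert spaces) are `(0,0)`
and `(1,1)`, then every endomorphism pair of `T` is a scalar pair `(λ • 1, λ • 1)`. -/
theorem endomorphism_algebra_trivial_projections_scalar (m n : ℕ)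
    (d : Fin m → ℕ) (e : Fin n → ℕ)
    (hd : ∀ i, 0 < d i) (he : ∀ j, 0 < e j)
    (T : Matrix (Σ i, Fin (d i)) (Σ j, Fin (e j)) ℂ)
    (hidem : ∀ (P : Matrix (Σ i, Fin (d i)) (Σ i, Fin (d i)) ℂ)
               (Q : Matrix (Σ j, Fin (e j)) (Σ j, Fin (e j)) ℂ),
        IsBlockDiag P → IsBlockDiag Q →
        P * T = T * Q → Q * Tᴴ = Tᴴ * P →
        P * P = P → Pᴴ = P → Q * Q = Q → Qᴴ = Q →
        (P = 0 ∧ Q = 0) ∨ (P = 1 ∧ Q = 1)) :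
    ∀ (A : Matrix (Σ i, Fin (d i)) (Σ i, Fin (d i)) ℂ)
      (B : Matrix (Σ j, Fin (e j)) (Σ j, Fin (e j)) ℂ),
      IsBlockDiag A → IsBlockDiag B →
      A * T = T * B → B * Tᴴ = Tᴴ * A →
      ∃ l : ℂ, A = l • 1 ∧ B = l • 1 := by
  intro A B hAbd hBbd hAT hBT
  by_cases hne : Nonempty (Σ i, Fin (d i)) ∨ Nonempty (Σ j, Fin (e j))
  case neg =>
    push_neg at hne
    obtain ⟨h1, h2⟩ := hne
    haveI := h1
    haveI := h2
    exact ⟨0, by ext p q; exact isEmptyElim p, by ext p q; exact isEmptyElim p⟩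
  case pos =>
  have hconj1 : Aᴴ * T = T * Bᴴ := by
    have := congrArg conjTranspose hBT
    simpa [conjTranspose_mul] using this.symm
  have hconj2 : Bᴴ * Tᴴ = Tᴴ * Aᴴ := by
    have := congrArg conjTranspose hAT
    simpa [conjTranspose_mul] using this.symm
  have hstarc : star (-(Complex.I) / 2) = -(-(Complex.I) / 2) := by
    simp [Complex.star_def, map_div₀, Complex.conj_I]
    ring
  obtain ⟨l1, hl1A, hl1B⟩ := hermitian_pair_scalar m n d e hne T hidem
    ((2⁻¹ : ℂ) • (A + Aᴴ)) ((2⁻¹ : ℂ) • (B + Bᴴ))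
    (bd_smul (bd_add hAbd (bd_conjT hAbd))) (bd_smul (bd_add hBbd (bd_conjT hBbd)))
    (by rw [Matrix.smul_mul, Matrix.mul_smul, Matrix.add_mul, Matrix.mul_add, hAT, hconj1])
    (by rw [Matrix.smul_mul, Matrix.mul_smul, Matrix.add_mul, Matrix.mul_add, hBT, hconj2])
    (by
      show _ᴴ = _
      rw [conjTranspose_smul, conjTranspose_add, conjTranspose_conjTranspose]
      rw [show star (2⁻¹ : ℂ) = 2⁻¹ by simp, add_comm])
    (by
      show _ᴴ = _
      rw [conjTranspose_smul, conjTranspose_add, conjTranspose_conjTranspose]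
      rw [show star (2⁻¹ : ℂ) = 2⁻¹ by simp, add_comm])
  obtain ⟨l2, hl2A, hl2B⟩ := hermitian_pair_scalar m n d e hne T hidem
    ((-(Complex.I) / 2) • (A - Aᴴ)) ((-(Complex.I) / 2) • (B - Bᴴ))
    (bd_smul (bd_sub hAbd (bd_conjT hAbd))) (bd_smul (bd_sub hBbd (bd_conjT hBbd)))
    (by rw [Matrix.smul_mul, Matrix.mul_smul, Matrix.sub_mul, Matrix.mul_sub, hAT, hconj1])
    (by rw [Matrix.smul_mul, Matrix.mul_smul, Matrix.sub_mul, Matrix.mul_sub, hBT, hconj2])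
    (by
      show _ᴴ = _
      rw [conjTranspose_smul, conjTranspose_sub, conjTranspose_conjTranspose, hstarc,
        neg_smul, ← smul_neg, neg_sub])
    (by
      show _ᴴ = _
      rw [conjTranspose_smul, conjTranspose_sub, conjTranspose_conjTranspose, hstarc,
        neg_smul, ← smul_neg, neg_sub])
  have hIc : Complex.I * (-(Complex.I) / 2) = 2⁻¹ := by
    linear_combination (-(1 : ℂ)/2) * Complex.I_sq
  refine ⟨(l1 : ℂ) + Complex.I * l2, ?_, ?_⟩
  · have hrec : A = (2⁻¹ : ℂ) • (A + Aᴴ) + Complex.I • ((-(Complex.I) / 2) • (A - Aᴴ)) := by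
      rw [smul_smul, hIc]
      module
    rw [hrec, hl1A, hl2A, smul_smul, ← add_smul]
  · have hrec : B = (2⁻¹ : ℂ) • (B + Bᴴ) + Complex.I • ((-(Complex.I) / 2) • (B - Bᴴ)) := by
      rw [smul_smul, hIc]
      module
    rw [hrec, hl1B, hl2B, smul_smul, ← add_smul]
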